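/- Let two pairs (E₁,F₁) and (E₂,F₂) each satisfy the CME with E's on [0,r] and F's on [0,2r], and suppose E₁(r)=E₂(0) and F₁(2r)=F₂(0) so that the composites are well-defined. Define E on [0,2r] by E(x)=E₁(x) for 0 ≤ x ≤ r and E(x)=E₂(x-r) for r < x ≤ 2r, and F on [0,4r] by F(x)=F₁(x) for 0 ≤ x ≤ 2r and F(x)=F₂(x-2r) for 2r < x ≤ 4r. If for each x in [0,2r] the arguments (x±F₁(x))/2 lie in [0,r], then the pair (E,F) satisfies the CME with E on [0,2r] and F on [0,4r]. -/

import Mathlib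

/-- Composition Lemma for the Conway Model Equation. -/
theorem cme_composition_lemma
    (r : ℝ) (hr : 0 < r) (E₁ F₁ E₂ F₂ E F : ℝ → ℝ)
    (harg₁ : ∀ x ∈ Set.Icc (0:ℝ) (2*r),
      (x + F₁ x) / 2 ∈ Set.Icc (0:ℝ) r ∧ (x - F₁ x) / 2 ∈ Set.Icc (0:ℝ) r)
    (harg₂ : ∀ x ∈ Set.Icc (0:ℝ) (2*r),
      (x + F₂ x) / 2 ∈ Set.Icc (0:ℝ) r ∧ (x - F₂ x) / 2 ∈ Set.Icc (0:ℝ) r)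
    (hCME₁ : ∀ x ∈ Set.Icc (0:ℝ) (2*r),
      F₁ x = E₁ ((x + F₁ x) / 2) + E₁ ((x - F₁ x) / 2))
    (hCME₂ : ∀ x ∈ Set.Icc (0:ℝ) (2*r),
      F₂ x = E₂ ((x + F₂ x) / 2) + E₂ ((x - F₂ x) / 2))
    (hmatchE : E₁ r = E₂ 0) (hmatchF : F₁ (2*r) = F₂ 0)
    (hE : ∀ x : ℝ, (0 ≤ x → x ≤ r → E x = E₁ x) ∧ (r < x → x ≤ 2*r → E x = E₂ (x - r)))
    (hF : ∀ x : ℝ, (0 ≤ x → x ≤ 2*r → F x = F₁ x) ∧ (2*r < x → x ≤ 4*r → F x = F₂ (x - 2*r))) :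
    ∀ x ∈ Set.Icc (0:ℝ) (4*r),
      (x + F x) / 2 ∈ Set.Icc (0:ℝ) (2*r) ∧ (x - F x) / 2 ∈ Set.Icc (0:ℝ) (2*r) ∧
      F x = E ((x + F x) / 2) + E ((x - F x) / 2) := by
  -- E agrees with E₁ on [0,r]
  have hE1 : ∀ t ∈ Set.Icc (0:ℝ) r, E t = E₁ t := fun t ht => (hE t).1 ht.1 ht.2
  -- E (t + r) = E₂ t for t ∈ [0,r]
  have hE2 : ∀ t ∈ Set.Icc (0:ℝ) r, E (t + r) = E₂ t := by
    intro t ht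
    rcases eq_or_lt_of_le ht.1 with h0 | h0
    · rw [← h0]; simp only [zero_add]
      rw [hE1 r ⟨le_of_lt hr, le_refl r⟩, hmatchE]
    · have := (hE (t + r)).2 (by linarith) (by linarith [ht.2])
      rw [this]; ring_nf
  intro x hx
  rcases le_or_gt x (2*r) with hx2 | hx2
  · -- first half
    have hxI : x ∈ Set.Icc (0:ℝ) (2*r) := ⟨hx.1, hx2⟩
    have hFx : F x = F₁ x := (hF x).1 hx.1 hx2
    obtain ⟨ha, hb⟩ := harg₁ x hxI
    rw [hFx]
    refine ⟨⟨ha.1, by linarith [ha.2]⟩, ⟨hb.1, by linarith [hb.2]⟩, ?_⟩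
    rw [hE1 _ ha, hE1 _ hb]
    exact hCME₁ x hxI
  · -- second half
    have hFx : F x = F₂ (x - 2*r) := (hF x).2 hx2 hx.2
    set y := x - 2*r with hy
    have hyI : y ∈ Set.Icc (0:ℝ) (2*r) := ⟨by linarith, by linarith [hx.2]⟩
    obtain ⟨ha, hb⟩ := harg₂ y hyI
    have e1 : (x + F x) / 2 = (y + F₂ y) / 2 + r := by rw [hFx, hy]; ring_nf
    have e2 : (x - F x) / 2 = (y - F₂ y) / 2 + r := by rw [hFx, hy]; ring_nf
    rw [e1, e2]
    refine ⟨⟨by linarith [ha.1], by linarith [ha.2]⟩,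
      ⟨by linarith [hb.1], by linarith [hb.2]⟩, ?_⟩
    rw [hFx, hE2 _ ha, hE2 _ hb]
    exact hCME₂ y hyI
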